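/- Under the independent-outcome cascading model with marginal probabilities p(x), the Bayes optimal sequence of length at most b is obtained as follows: let J*_s be the sequence consisting of the s items with largest marginal probabilities, sorted in non-increasing order of p, and let s* = argmax_{s=0,1,...,b} E_Y[R(J*_s, Y)]. Then J* = J*_{s*} maximizes the expected reward over all sequences of length at most b. -/

import Mathlib

noncomputable def seqReward {ι : Type*} (p : ι → ℝ) : (ℕ → ℝ) → (ℕ → ℝ) → List ι → ℝ
  | _, l, [] => l 0
  | r, l, x :: L => r 1 * p x + (1 - p x) * seqReward p (fun i => r (i + 1)) (fun i => l (i + 1)) L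

namespace BayesAux

structure RLH (r ℓ : ℕ → ℝ) : Prop where
  r_pos : ∀ i, 1 ≤ i → 0 < r i
  r_mono : ∀ i, 1 ≤ i → r (i + 1) ≤ r i
  l_neg : ∀ i, ℓ i < 0

lemma RLH.shift {r ℓ : ℕ → ℝ} (h : RLH r ℓ) :
    RLH (fun i => r (i + 1)) (fun i => ℓ (i + 1)) :=
  ⟨fun i _ => h.r_pos (i + 1) (by omega), fun i _ => h.r_mono (i + 1) (by omega),
   fun i => h.l_neg (i + 1)⟩

variable {ι : Type*} {p : ι → ℝ}

lemma seqReward_le (hp : ∀ x, p x ∈ Set.Icc (0:ℝ) 1) :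
    ∀ (L : List ι) (r ℓ : ℕ → ℝ), RLH r ℓ → seqReward p r ℓ L ≤ r 1
  | [], r, ℓ, h => (h.l_neg 0).le.trans (h.r_pos 1 le_rfl).le
  | x :: T, r, ℓ, h => by
      have hx := hp x
      have hT := seqReward_le hp T _ _ h.shift
      have h21 : r 2 ≤ r 1 := h.r_mono 1 le_rfl
      simp only [seqReward] at *
      nlinarith [hx.1, hx.2]

lemma seqReward_cons_mono (hp : ∀ x, p x ∈ Set.Icc (0:ℝ) 1) (r ℓ : ℕ → ℝ) (x : ι)
    {T T' : List ι}
    (h : seqReward p (fun i => r (i + 1)) (fun i => ℓ (i + 1)) T ≤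
         seqReward p (fun i => r (i + 1)) (fun i => ℓ (i + 1)) T') :
    seqReward p r ℓ (x :: T) ≤ seqReward p r ℓ (x :: T') := by
  have hx := hp x
  simp only [seqReward]
  nlinarith [hx.2]

lemma seqReward_swap (hp : ∀ x, p x ∈ Set.Icc (0:ℝ) 1) (r ℓ : ℕ → ℝ) (h : RLH r ℓ)
    {a b : ι} (hab : p a ≤ p b) (T : List ι) :
    seqReward p r ℓ (a :: b :: T) ≤ seqReward p r ℓ (b :: a :: T) := by
  have ha := hp a
  have hb := hp b
  have h21 : r 2 ≤ r 1 := h.r_mono 1 le_rfl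
  simp only [seqReward]
  nlinarith [mul_nonneg (sub_nonneg.2 h21) (sub_nonneg.2 hab)]

lemma seqReward_forall₂ (hp : ∀ x, p x ∈ Set.Icc (0:ℝ) 1) :
    ∀ (L J : List ι) (r ℓ : ℕ → ℝ), RLH r ℓ →
      List.Forall₂ (fun x y => p x ≤ p y) L J →
      seqReward p r ℓ L ≤ seqReward p r ℓ J
  | [], [], r, ℓ, h, _ => le_rfl
  | x :: T, y :: K, r, ℓ, h, hf => by
      obtain ⟨hxy, hTK⟩ := List.forall₂_cons.mp hf
      have hx := hp x
      have hy := hp y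
      have hTK' := seqReward_forall₂ hp T K _ _ h.shift hTK
      have hK := seqReward_le hp K _ _ h.shift
      have h21 : r 2 ≤ r 1 := h.r_mono 1 le_rfl
      simp only [seqReward] at *
      nlinarith [hx.1, hx.2, hy.1, hy.2]

lemma seqReward_orderedInsert (hp : ∀ x, p x ∈ Set.Icc (0:ℝ) 1)
    [DecidableRel (fun a c : ι => p c ≤ p a)] :
    ∀ (T : List ι) (r ℓ : ℕ → ℝ), RLH r ℓ → (a : ι) →
      T.Pairwise (fun a c => p c ≤ p a) →
      seqReward p r ℓ (a :: T) ≤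
        seqReward p r ℓ (List.orderedInsert (fun a c => p c ≤ p a) a T)
  | [], r, ℓ, h, a, _ => le_rfl
  | b :: T, r, ℓ, h, a, hs => by
      by_cases hab : p b ≤ p a
      · simp [List.orderedInsert, hab]
      · have h1 : seqReward p r ℓ (a :: b :: T) ≤ seqReward p r ℓ (b :: a :: T) :=
          seqReward_swap hp r ℓ h (le_of_not_ge hab) T
        have h2 := seqReward_orderedInsert hp T _ _ h.shift a hs.of_cons
        simp only [List.orderedInsert, if_neg hab]
        exact h1.trans (seqReward_cons_mono hp r ℓ b h2)

lemma seqReward_sort (hp : ∀ x, p x ∈ Set.Icc (0:ℝ) 1)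
    [DecidableRel (fun a c : ι => p c ≤ p a)] :
    ∀ (L : List ι) (r ℓ : ℕ → ℝ), RLH r ℓ →
      seqReward p r ℓ L ≤ seqReward p r ℓ (List.insertionSort (fun a c => p c ≤ p a) L)
  | [], r, ℓ, h => le_rfl
  | x :: T, r, ℓ, h => by
      haveI : Std.Total (fun a c => p c ≤ p a) := ⟨fun a c => le_total (p c) (p a)⟩
      haveI : IsTrans ι (fun a c => p c ≤ p a) :=
        ⟨fun a c d (h1 : p c ≤ p a) (h2 : p d ≤ p c) => le_trans h2 h1⟩
      have h1 := seqReward_sort hp T _ _ h.shift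
      have h2 := seqReward_orderedInsert hp
        (List.insertionSort (fun a c => p c ≤ p a) T) r ℓ h x
        (List.pairwise_insertionSort _ T)
      simp only [List.insertionSort]
      exact (seqReward_cons_mono hp r ℓ x h1).trans h2

lemma key_forall₂ [DecidableEq ι] (L J : List ι) (hlen : L.length = J.length)
    (hLnd : L.Nodup) (hJnd : J.Nodup)
    (hLs : L.Pairwise (fun a c => p c ≤ p a)) (hJs : J.Pairwise (fun a c => p c ≤ p a))
    (htop : ∀ x ∈ J, ∀ y, y ∉ J → p y ≤ p x) :
    List.Forall₂ (fun x y => p x ≤ p y) L J := by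
  rw [List.forall₂_iff_get]
  refine ⟨hlen, fun i h₁ h₂ => ?_⟩
  by_contra hlt
  push_neg at hlt
  -- every L.get j for j ≤ i is in J with index < i
  have hmemJ : ∀ (j : Fin L.length), (j : ℕ) ≤ i → L.get j ∈ J := by
    intro j hj
    by_contra hnot
    have h1 : p (L.get j) ≤ p (J.get ⟨i, h₂⟩) :=
      htop _ (J.get_mem _) _ hnot
    have h2 : p (L.get ⟨i, h₁⟩) ≤ p (L.get j) := by
      rcases lt_or_eq_of_le hj with hlt' | heq
      · exact List.pairwise_iff_get.mp hLs j ⟨i, h₁⟩ hlt'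
      · have : j = ⟨i, h₁⟩ := Fin.ext heq
        rw [this]
    linarith
  have hidx : ∀ (j : Fin L.length), (j : ℕ) ≤ i → J.idxOf (L.get j) < i := by
    intro j hj
    have hmem := hmemJ j hj
    have hlt' : J.idxOf (L.get j) < J.length := List.idxOf_lt_length_iff.mpr hmem
    by_contra hge
    push_neg at hge
    have hgetJ : J.get ⟨J.idxOf (L.get j), hlt'⟩ = L.get j := List.idxOf_get hlt'
    have h2 : p (L.get ⟨i, h₁⟩) ≤ p (L.get j) := by
      rcases lt_or_eq_of_le hj with hlt'' | heq
      · exact List.pairwise_iff_get.mp hLs j ⟨i, h₁⟩ hlt''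
      · have : j = ⟨i, h₁⟩ := Fin.ext heq
        rw [this]
    rcases lt_or_eq_of_le hge with hgt | heq
    · have := List.pairwise_iff_get.mp hJs ⟨i, h₂⟩ ⟨J.idxOf (L.get j), hlt'⟩ hgt
      rw [hgetJ] at this
      linarith
    · have : (⟨J.idxOf (L.get j), hlt'⟩ : Fin J.length) = ⟨i, h₂⟩ := Fin.ext heq.symm
      rw [this] at hgetJ
      linarith [hgetJ ▸ h2]
  -- build an injection Fin (i+1) → Fin i
  have hi1 : ∀ (j : Fin (i + 1)), (j : ℕ) < L.length := fun j => lt_of_le_of_lt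
    (Nat.lt_succ_iff.mp j.isLt) h₁
  let f : Fin (i + 1) → Fin i := fun j =>
    ⟨J.idxOf (L.get ⟨j, hi1 j⟩), hidx ⟨j, hi1 j⟩ (Nat.lt_succ_iff.mp j.isLt)⟩
  have hinj : Function.Injective f := by
    intro j j' he
    have h1 : (f j : ℕ) = (f j' : ℕ) := congrArg Fin.val he
    have hm := hmemJ ⟨j, hi1 j⟩ (Nat.lt_succ_iff.mp j.isLt)
    have hm' := hmemJ ⟨j', hi1 j'⟩ (Nat.lt_succ_iff.mp j'.isLt)
    have hlt1 : J.idxOf (L.get ⟨j, hi1 j⟩) < J.length := List.idxOf_lt_length_iff.mpr hm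
    have hlt2 : J.idxOf (L.get ⟨j', hi1 j'⟩) < J.length := List.idxOf_lt_length_iff.mpr hm'
    have e1 : J.get ⟨J.idxOf (L.get ⟨j, hi1 j⟩), hlt1⟩ = L.get ⟨j, hi1 j⟩ :=
      List.idxOf_get hlt1
    have e2 : J.get ⟨J.idxOf (L.get ⟨j', hi1 j'⟩), hlt2⟩ = L.get ⟨j', hi1 j'⟩ :=
      List.idxOf_get hlt2
    have : L.get ⟨j, hi1 j⟩ = L.get ⟨j', hi1 j'⟩ := by
      rw [← e1, ← e2]
      congr 1
      exact Fin.ext h1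
    have hj := (List.Nodup.get_inj_iff hLnd).mp this
    have hv : (j : ℕ) = (j' : ℕ) := by simpa using congrArg Fin.val hj
    exact Fin.ext hv
  have := Fintype.card_le_of_injective f hinj
  simp at this

end BayesAux

theorem bayes_optimal_independent
    {ι : Type*} [Fintype ι] (p : ι → ℝ) (r ℓ : ℕ → ℝ) (b : ℕ)
    (hp : ∀ x, p x ∈ Set.Icc (0:ℝ) 1)
    (hr_le_one : ∀ i, 1 ≤ i → r i ≤ 1)
    (hr_pos : ∀ i, 1 ≤ i → 0 < r i)
    (hr_mono : ∀ i, 1 ≤ i → r (i + 1) ≤ r i)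
    (hℓ_mono : ∀ i, ℓ (i + 1) ≤ ℓ i)
    (hℓ_neg : ∀ i, ℓ i < 0)
    (hℓ_gt : ∀ i, -1 < ℓ i)
    (Js : ℕ → List ι)
    (hlen : ∀ s ≤ b, (Js s).length = s)
    (hnodup : ∀ s ≤ b, (Js s).Nodup)
    (hsorted : ∀ s ≤ b, (Js s).Pairwise (fun a c => p c ≤ p a))
    (htop : ∀ s ≤ b, ∀ x ∈ Js s, ∀ y, y ∉ Js s → p y ≤ p x)
    (sstar : ℕ) (hsstar : sstar ≤ b)
    (hmax : ∀ s ≤ b, seqReward p r ℓ (Js s) ≤ seqReward p r ℓ (Js sstar)) :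
    ∀ L : List ι, L.Nodup → L.length ≤ b →
      seqReward p r ℓ L ≤ seqReward p r ℓ (Js sstar) := by
  classical
  intro L hLnd hLb
  have h : BayesAux.RLH r ℓ := ⟨hr_pos, hr_mono, hℓ_neg⟩
  set s := L.length with hs
  set rel := fun a c : ι => p c ≤ p a with hrel
  set L' := List.insertionSort rel L with hL'
  haveI : Std.Total rel := ⟨fun a c => le_total (p c) (p a)⟩
  haveI : IsTrans ι rel := ⟨fun a c d (h1 : p c ≤ p a) (h2 : p d ≤ p c) => le_trans h2 h1⟩
  have hperm : List.Perm L' L := List.perm_insertionSort rel L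
  have step1 : seqReward p r ℓ L ≤ seqReward p r ℓ L' :=
    BayesAux.seqReward_sort hp L r ℓ h
  have hlen' : L'.length = (Js s).length := by
    rw [hperm.length_eq, hlen s hLb]
  have step2 : seqReward p r ℓ L' ≤ seqReward p r ℓ (Js s) := by
    refine BayesAux.seqReward_forall₂ hp L' (Js s) r ℓ h ?_
    exact BayesAux.key_forall₂ L' (Js s) hlen' (hperm.nodup_iff.mpr hLnd)
      (hnodup s hLb) (List.pairwise_insertionSort rel L) (hsorted s hLb) (htop s hLb)
  exact step1.trans (step2.trans (hmax s hLb))
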